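/- Let K_1 be a finite linearly ordered set, X any type, f : K_1 → ℂ, and φ_k, ψ_k : X → ℂ for k ∈ K_1. For N-tuples y, y' ∈ X^N, Σ_{k ∈ K_N} f(k) Φ_k(y) Ψ_k(y') = Σ_{σ ∈ S_N} sgn(σ) ∏_{α=1}^N ( Σ_{k ∈ K_1} f(k) φ_k(y_α) ψ_k(y'_{σ(α)}) ); equivalently, the left side equals the determinant of the N×N matrix whose (α,β) entry is Σ_{k ∈ K_1} f(k) φ_k(y_α) ψ_k(y'_β). -/

import Mathlib

open Finset BigOperators
open scoped Classical

noncomputable section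

/-- The odd sites of the strip: `{y : 1 ≤ y ≤ L, y odd}`. -/
def SetO (L : ℤ) : Finset ℤ := (Finset.Icc 1 L).filter (fun y => Odd y)

/-- The even sites of the strip: `{y : 0 ≤ y ≤ L, y even}`. -/
def SetE (L : ℤ) : Finset ℤ := (Finset.Icc 0 L).filter (fun y => Even y)

/-- Parity-indexed site sets: `true ↦ odd`, `false ↦ even`. -/
def Sp (L : ℤ) : Bool → Finset ℤ := fun p => if p then SetO L else SetE L

/-- Strictly increasing `N`-tuples with entries in `S`. -/
def UU {α : Type*} [LinearOrder α] (S : Finset α) (N : ℕ) : Finset (Fin N → α) :=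
  (Fintype.piFinset (fun _ => S)).filter (fun y => ∀ i j : Fin N, i < j → y i < y j)

/-- One-step transfer matrix entry: `w y y'` when `|y - y'| = 1`, and `0` otherwise. -/
def T1 (w : ℤ → ℤ → ℂ) (y y' : ℤ) : ℂ := if |y - y'| = 1 then w y y' else 0

/-- `N`-walk transfer matrix entry: product of one-step entries. -/
def TN (w : ℤ → ℤ → ℂ) {N : ℕ} (y y' : Fin N → ℤ) : ℂ := ∏ i, T1 w (y i) (y' i)

/-- Powers of a matrix indexed by a finite set `S`. -/
def matPow {α : Type*} [DecidableEq α] (S : Finset α) (M : α → α → ℂ) : ℕ → α → α → ℂ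
  | 0 => fun y y' => if y = y' then 1 else 0
  | r + 1 => fun y y' => ∑ z ∈ S, matPow S M r y z * M z y'

/-- Weight of a family of `N` walks of length `t`. -/
def walkWeight (w : ℤ → ℤ → ℂ) (v : ℤ → ℂ) {N t : ℕ} (y : Fin N → Fin (t + 1) → ℤ) : ℂ :=
  (∏ j, v (y j 0)) * ∏ m : Fin t, ∏ j, w (y j m.castSucc) (y j m.succ)

/-- The constraints on families of non-intersecting walks in the strip `0 ≤ y ≤ L`. -/
def stripCond (L : ℤ) {N t : ℕ} (yi yf : Fin N → ℤ) (y : Fin N → Fin (t + 1) → ℤ) : Prop :=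
  (∀ j, y j 0 = yi j) ∧ (∀ j, y j (Fin.last t) = yf j) ∧
    (∀ j m, 0 ≤ y j m ∧ y j m ≤ L) ∧
    (∀ j, ∀ m : Fin t, y j m.succ = y j m.castSucc + 1 ∨ y j m.succ = y j m.castSucc - 1) ∧
    (∀ m, ∀ i j : Fin N, i < j → y i m < y j m)

/-- The `N`-walk strip generating function `Z^N_t(y^i → y^f)`. -/
def Zgen (L : ℤ) (w : ℤ → ℤ → ℂ) (v : ℤ → ℂ) (N t : ℕ) (yi yf : Fin N → ℤ) : ℂ :=
  ∑ y ∈ (Fintype.piFinset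
      (fun _ : Fin N => Fintype.piFinset (fun _ : Fin (t + 1) => Finset.Icc 0 L))).filter
        (stripCond L yi yf), walkWeight w v y

/-- The constraints on families of non-intersecting walks with a single wall `y ≥ 0`. -/
def barCond {N t : ℕ} (yi yf : Fin N → ℤ) (y : Fin N → Fin (t + 1) → ℤ) : Prop :=
  (∀ j, y j 0 = yi j) ∧ (∀ j, y j (Fin.last t) = yf j) ∧
    (∀ j m, 0 ≤ y j m) ∧
    (∀ j, ∀ m : Fin t, y j m.succ = y j m.castSucc + 1 ∨ y j m.succ = y j m.castSucc - 1) ∧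
    (∀ m, ∀ i j : Fin N, i < j → y i m < y j m)

/-- The one-wall `N`-walk generating function `Z̄^N_t(y^i → y^f)`. -/
def Zbar (w : ℤ → ℤ → ℂ) (v : ℤ → ℂ) (N t : ℕ) (yi yf : Fin N → ℤ) : ℂ :=
  ∑ᶠ (y : Fin N → Fin (t + 1) → ℤ) (_ : barCond yi yf y), walkWeight w v y

/-- The Bethe Ansatz determinant built from a family of one-walk vectors. -/
def BA {K X : Type*} {N : ℕ} (φ : K → X → ℂ) (k : Fin N → K) (y : Fin N → X) : ℂ :=
  ∑ σ : Equiv.Perm (Fin N), ((Equiv.Perm.sign σ : ℤ) : ℂ) * ∏ a, φ (k (σ a)) (y a)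

end

noncomputable section AuxKsum

open Equiv Finset

variable {K : Type*} [Fintype K] [LinearOrder K] {N : ℕ}

lemma mem_UU_univ (k : Fin N → K) : k ∈ UU (Finset.univ : Finset K) N ↔ StrictMono k := by
  simp only [UU, Finset.mem_filter, Fintype.mem_piFinset, Finset.mem_univ, forall_const]
  constructor
  · intro h a b hab; exact h.2 a b hab
  · intro h; exact ⟨fun _ => trivial, fun a b hab => h hab⟩

lemma BA_eq_det {X : Type*} (φ : K → X → ℂ) (k : Fin N → K) (y : Fin N → X) :
    BA φ k y = Matrix.det (Matrix.of fun i j => φ (k i) (y j)) := by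
  rw [Matrix.det_apply']; rfl

lemma card_image_inj (k : Fin N → K) (h : Function.Injective k) :
    (Finset.image k Finset.univ).card = N := by
  rw [Finset.card_image_of_injective _ h, Finset.card_univ, Fintype.card_fin]

/-- The increasing reordering of an injective tuple. -/
def sortOf (k : Fin N → K) : Fin N → K :=
  if h : Function.Injective k then
    (Finset.image k Finset.univ).orderEmbOfFin (card_image_inj k h) else k

/-- The permutation relating an injective tuple to its increasing reordering. -/
def permOf (k : Fin N → K) : Equiv.Perm (Fin N) :=
  if h : Function.Injective k then
    Equiv.ofBijective
      (fun a => ((Finset.image k Finset.univ).orderIsoOfFin (card_image_inj k h)).symm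
        ⟨k a, Finset.mem_image_of_mem k (Finset.mem_univ a)⟩)
      (Finite.injective_iff_bijective.1 (fun a b hab => by
        have h2 : (⟨k a, Finset.mem_image_of_mem k (Finset.mem_univ a)⟩ :
            (Finset.image k Finset.univ : Finset K)) =
            ⟨k b, Finset.mem_image_of_mem k (Finset.mem_univ b)⟩ :=
          ((Finset.image k Finset.univ).orderIsoOfFin
            (card_image_inj k h)).symm.injective hab
        exact h (congrArg Subtype.val h2)))
  else 1

lemma sortOf_comp_permOf (k : Fin N → K) (h : Function.Injective k) :
    sortOf k ∘ permOf k = k := by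
  funext a
  simp only [sortOf, permOf, dif_pos h, Function.comp_apply, Equiv.ofBijective_apply]
  rw [← Finset.coe_orderIsoOfFin_apply, OrderIso.apply_symm_apply]

lemma sortOf_strictMono (k : Fin N → K) (h : Function.Injective k) :
    StrictMono (sortOf k) := by
  simp only [sortOf, dif_pos h]
  exact (Finset.orderEmbOfFin _ _).strictMono

lemma sortOf_eq (k₀ : Fin N → K) (hmono : StrictMono k₀) (τ : Equiv.Perm (Fin N)) :
    sortOf (k₀ ∘ τ) = k₀ := by
  have hinj : Function.Injective (k₀ ∘ τ) := hmono.injective.comp τ.injective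
  have himg : Finset.image (k₀ ∘ τ) Finset.univ = Finset.image k₀ Finset.univ := by
    ext x
    simp only [Finset.mem_image, Finset.mem_univ, true_and, Function.comp_apply]
    constructor
    · rintro ⟨a, rfl⟩; exact ⟨τ a, rfl⟩
    · rintro ⟨a, rfl⟩; exact ⟨τ.symm a, by simp⟩
  have hmem : ∀ x, k₀ x ∈ Finset.image (k₀ ∘ τ) Finset.univ := by
    intro x; rw [himg]; exact Finset.mem_image_of_mem _ (Finset.mem_univ x)
  simp only [sortOf, dif_pos hinj]
  exact (Finset.orderEmbOfFin_unique (card_image_inj _ hinj) hmem hmono).symm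

lemma permOf_eq (k₀ : Fin N → K) (hmono : StrictMono k₀) (τ : Equiv.Perm (Fin N)) :
    permOf (k₀ ∘ τ) = τ := by
  have hinj : Function.Injective (k₀ ∘ τ) := hmono.injective.comp τ.injective
  ext a
  have h1 := congrFun (sortOf_comp_permOf (k₀ ∘ τ) hinj) a
  rw [sortOf_eq k₀ hmono τ] at h1
  exact congrArg Fin.val (hmono.injective h1)

lemma sum_eq_sum_UU (G : (Fin N → K) → ℂ)
    (h0 : ∀ k : Fin N → K, ¬ Function.Injective k → G k = 0) :
    ∑ k : Fin N → K, G k =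
      ∑ k ∈ UU (Finset.univ : Finset K) N, ∑ τ : Equiv.Perm (Fin N), G (k ∘ τ) := by
  rw [← Finset.sum_filter_add_sum_filter_not Finset.univ (fun k => Function.Injective k) G]
  have h2 : ∑ k ∈ Finset.univ.filter (fun k : Fin N → K => ¬ Function.Injective k), G k = 0 :=
    Finset.sum_eq_zero fun k hk => h0 k (Finset.mem_filter.1 hk).2
  rw [h2, add_zero]
  refine Eq.trans ?_ (Finset.sum_product (s := UU (Finset.univ : Finset K) N)
    (t := (Finset.univ : Finset (Equiv.Perm (Fin N)))) (f := fun p => G (p.1 ∘ p.2)))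
  refine Finset.sum_nbij' (fun k => (sortOf k, permOf k)) (fun p => p.1 ∘ p.2) ?_ ?_ ?_ ?_ ?_
  · intro k hk
    have hinj : Function.Injective k := (Finset.mem_filter.1 hk).2
    refine Finset.mem_product.2 ⟨(mem_UU_univ _).2 (sortOf_strictMono k hinj),
      Finset.mem_univ _⟩
  · intro p hp
    have hmono : StrictMono p.1 := (mem_UU_univ _).1 (Finset.mem_product.1 hp).1
    exact Finset.mem_filter.2 ⟨Finset.mem_univ _, hmono.injective.comp p.2.injective⟩
  · intro k hk
    exact sortOf_comp_permOf k (Finset.mem_filter.1 hk).2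
  · intro p hp
    have hmono : StrictMono p.1 := (mem_UU_univ _).1 (Finset.mem_product.1 hp).1
    exact Prod.ext (sortOf_eq p.1 hmono p.2) (permOf_eq p.1 hmono p.2)
  · intro k hk
    rw [sortOf_comp_permOf k (Finset.mem_filter.1 hk).2]

lemma det_row_expand (c : Fin N → K → ℂ) (v : K → Fin N → ℂ) :
    Matrix.det (Matrix.of fun a b => ∑ kk : K, c a kk * v kk b) =
      ∑ r : Fin N → K, (∏ a, c a (r a)) * Matrix.det (Matrix.of fun a b => v (r a) b) := by
  have h1 : (Matrix.of fun a b => ∑ kk : K, c a kk * v kk b)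
      = fun a => ∑ kk : K, c a kk • v kk := by
    funext a b
    simp [Finset.sum_apply]
  show (Matrix.detRowAlternating (R := ℂ) (n := Fin N)).toMultilinearMap _ = _
  rw [h1, (Matrix.detRowAlternating (R := ℂ) (n := Fin N)).toMultilinearMap.map_sum]
  refine Finset.sum_congr rfl fun r _ => ?_
  have := (Matrix.detRowAlternating (R := ℂ) (n := Fin N)).toMultilinearMap.map_smul_univ
    (fun a => c a (r a)) (fun a => v (r a))
  simp only [smul_eq_mul] at this
  exact this

end AuxKsum


noncomputable section Aux2

open Equiv Finset

variable {K : Type*} [Fintype K] [LinearOrder K] {N : ℕ}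

lemma sum_perm_G {X : Type*} (f : K → ℂ) (φ ψ : K → X → ℂ) (y y' : Fin N → X)
    (k : Fin N → K) :
    ∑ τ : Equiv.Perm (Fin N),
        (∏ a, f ((k ∘ τ) a) * φ ((k ∘ τ) a) (y a)) *
          Matrix.det (Matrix.of fun a b => ψ ((k ∘ τ) a) (y' b)) =
      (∏ a, f (k a)) * (BA φ k y * BA ψ k y') := by
  have hterm : ∀ τ : Equiv.Perm (Fin N),
      (∏ a, f ((k ∘ τ) a) * φ ((k ∘ τ) a) (y a)) *
        Matrix.det (Matrix.of fun a b => ψ ((k ∘ τ) a) (y' b)) =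
      (∏ a, f (k a)) * ((((Equiv.Perm.sign τ : ℤ) : ℂ) * ∏ a, φ (k (τ a)) (y a)) *
        Matrix.det (Matrix.of fun i b => ψ (k i) (y' b))) := by
    intro τ
    have hdet : Matrix.det (Matrix.of fun a b => ψ ((k ∘ τ) a) (y' b)) =
        ((Equiv.Perm.sign τ : ℤ) : ℂ) * Matrix.det (Matrix.of fun i b => ψ (k i) (y' b)) := by
      have h1 : (Matrix.of fun a b => ψ ((k ∘ τ) a) (y' b)) =
          (Matrix.of fun i b => ψ (k i) (y' b)).submatrix τ id := rfl
      rw [h1, Matrix.det_permute]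
    simp only [Function.comp_apply] at hdet ⊢
    rw [hdet, Finset.prod_mul_distrib, Equiv.prod_comp τ (fun i => f (k i))]
    ring
  rw [Finset.sum_congr rfl (fun τ _ => hterm τ), ← Finset.mul_sum, ← Finset.sum_mul,
    BA_eq_det ψ k y']
  rfl

end Aux2

/-- the `k`-summation identity for Bethe Ansatz determinants (equation (17)
of the paper), in both permutation-sum and determinant form. -/
theorem ksum_identity (K X : Type*) [Fintype K] [LinearOrder K] (N : ℕ)
    (f : K → ℂ) (φ ψ : K → X → ℂ) (y y' : Fin N → X) :
    (∑ k ∈ UU (Finset.univ : Finset K) N, (∏ a, f (k a)) * (BA φ k y * BA ψ k y') =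
      ∑ σ : Equiv.Perm (Fin N), ((Equiv.Perm.sign σ : ℤ) : ℂ) *
        ∏ a, (∑ kk : K, f kk * φ kk (y a) * ψ kk (y' (σ a)))) ∧
    (∑ k ∈ UU (Finset.univ : Finset K) N, (∏ a, f (k a)) * (BA φ k y * BA ψ k y') =
      Matrix.det (Matrix.of fun a b : Fin N => ∑ kk : K, f kk * φ kk (y a) * ψ kk (y' b))) := by
  classical
  set G : (Fin N → K) → ℂ := fun r =>
    (∏ a, f (r a) * φ (r a) (y a)) * Matrix.det (Matrix.of fun a b => ψ (r a) (y' b)) with hG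
  have h0 : ∀ r : Fin N → K, ¬ Function.Injective r → G r = 0 := by
    intro r hr
    obtain ⟨a, b, hab, hne⟩ := Function.not_injective_iff.1 hr
    have hz : Matrix.det (Matrix.of fun a b => ψ (r a) (y' b)) = 0 :=
      Matrix.det_zero_of_row_eq hne (by
        funext c
        show ψ (r a) (y' c) = ψ (r b) (y' c)
        rw [hab])
    simp [hG, hz]
  have key : (∑ k ∈ UU (Finset.univ : Finset K) N, (∏ a, f (k a)) * (BA φ k y * BA ψ k y')) =
      Matrix.det (Matrix.of fun a b : Fin N => ∑ kk : K, f kk * φ kk (y a) * ψ kk (y' b)) :=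
    calc (∑ k ∈ UU (Finset.univ : Finset K) N, (∏ a, f (k a)) * (BA φ k y * BA ψ k y'))
        = ∑ k ∈ UU (Finset.univ : Finset K) N, ∑ τ : Equiv.Perm (Fin N), G (k ∘ τ) :=
          Finset.sum_congr rfl fun k _ => (sum_perm_G f φ ψ y y' k).symm
      _ = ∑ r : Fin N → K, G r := (sum_eq_sum_UU G h0).symm
      _ = Matrix.det (Matrix.of fun a b : Fin N => ∑ kk : K, f kk * φ kk (y a) * ψ kk (y' b)) :=
          (det_row_expand (fun a kk => f kk * φ kk (y a)) (fun kk b => ψ kk (y' b))).symm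
  constructor
  · rw [key, ← Matrix.det_transpose, Matrix.det_apply']
    refine (Finset.sum_congr rfl fun σ _ => ?_).symm
    rfl
  · exact key
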